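/- For every real k > 1, ∫₀^π artanh(sin φ / k)·sin φ dφ = π·(k − √(k² − 1)). -/

import Mathlib

open Real

/-- The inverse hyperbolic tangent. -/
noncomputable def Real.artanhLog (x : ℝ) : ℝ := (1 / 2) * Real.log ((1 + x) / (1 - x))

lemma alg1 (k s c S C : ℝ) (hck : s = c * k)
    (hsc : S ^ 2 + C ^ 2 = 1) (hs2 : s ^ 2 = k ^ 2 - 1)
    (hD : (0:ℝ) < C ^ 2 + c * S ^ 2) (hden : (0:ℝ) < k ^ 2 - S ^ 2) (hk0 : (0:ℝ) < k) :
    ((c - 1) * (C * C + S * -S) * (C ^ 2 + c * S ^ 2) -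
        (c - 1) * (S * C) * (2 * C ^ 1 * -S + c * (2 * S ^ 1 * C))) /
        (C ^ 2 + c * S ^ 2) ^ 2 /
        (1 + ((c - 1) * (S * C) / (C ^ 2 + c * S ^ 2)) ^ 2) =
      k * s / (k ^ 2 - S ^ 2) - 1 := by
  have hDne := hD.ne'
  have hD2 : (C ^ 2 + c * S ^ 2) ^ 2 ≠ 0 := pow_ne_zero _ hDne
  have key : (C ^ 2 + c * S ^ 2) ^ 2 * (1 + ((c - 1) * (S * C) / (C ^ 2 + c * S ^ 2)) ^ 2)
      = C ^ 2 + c ^ 2 * S ^ 2 := by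
    rw [div_pow, mul_add, mul_one, mul_div_cancel₀ _ hD2]
    linear_combination (C ^ 2 + c ^ 2 * S ^ 2) * hsc
  have hnum : (c - 1) * (C * C + S * -S) * (C ^ 2 + c * S ^ 2) -
      (c - 1) * (S * C) * (2 * C ^ 1 * -S + c * (2 * S ^ 1 * C)) =
      (c - 1) * (C ^ 2 - c * S ^ 2) := by
    linear_combination ((c - 1) * (C ^ 2 - c * S ^ 2)) * hsc
  have hCc : (0:ℝ) < C ^ 2 + c ^ 2 * S ^ 2 := by
    have h3 : k ^ 2 * (C ^ 2 + c ^ 2 * S ^ 2) = k ^ 2 - S ^ 2 := by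
      linear_combination k ^ 2 * hsc - S ^ 2 * (c * k + s) * hck + S ^ 2 * hs2
    nlinarith
  rw [div_div, key, hnum, div_eq_iff hCc.ne']
  have : k * s / (k ^ 2 - S ^ 2) = (k * s) / (k ^ 2 - S ^ 2) := rfl
  field_simp [hden.ne']
  linear_combination (-c + c*k^2 - c*S^2 - c^2*s*k) * hsc + (-c + c*C^2) * hs2
    + (-(C^2*k) + c*s - c*s*C^2) * hck



lemma deriv_main (k : ℝ) (hk : 1 < k) (x : ℝ) :
    HasDerivAt (fun y : ℝ => -Real.cos y * Real.artanhLog (Real.sin y / k) + k * y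
      - Real.sqrt (k ^ 2 - 1) * (y + Real.arctan
        ((Real.sqrt (k ^ 2 - 1) / k - 1) * (Real.sin y * Real.cos y) /
          (Real.cos y ^ 2 + Real.sqrt (k ^ 2 - 1) / k * Real.sin y ^ 2))))
      (Real.artanhLog (Real.sin x / k) * Real.sin x) x := by
  set s := Real.sqrt (k ^ 2 - 1) with hsdef
  have hk0 : (0:ℝ) < k := by linarith
  have hs2 : s ^ 2 = k ^ 2 - 1 := Real.sq_sqrt (by nlinarith)
  have hs : 0 < s := Real.sqrt_pos.mpr (by nlinarith)
  have hc : 0 < s / k := div_pos hs hk0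
  have h1 : ∀ y : ℝ, (0:ℝ) < 1 + Real.sin y / k := by
    intro y
    have := Real.neg_one_le_sin y
    have h2 : -1 < Real.sin y / k := by
      rw [lt_div_iff₀ hk0]; nlinarith
    linarith
  have h2 : ∀ y : ℝ, (0:ℝ) < 1 - Real.sin y / k := by
    intro y
    have := Real.sin_le_one y
    have h2 : Real.sin y / k < 1 := by
      rw [div_lt_iff₀ hk0]; nlinarith
    linarith
  have hden : (0:ℝ) < k ^ 2 - Real.sin x ^ 2 := by
    nlinarith [Real.sin_le_one x, Real.neg_one_le_sin x]
  have hD : (0:ℝ) < Real.cos x ^ 2 + s / k * Real.sin x ^ 2 := by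
    by_cases hcx : Real.cos x = 0
    · have hs1 : Real.sin x ^ 2 = 1 := by nlinarith [Real.sin_sq_add_cos_sq x]
      rw [hcx, hs1]; simpa using hc
    · have h1' : 0 < Real.cos x ^ 2 := by positivity
      nlinarith [mul_nonneg hc.le (sq_nonneg (Real.sin x))]
  -- derivative of artanh(sin y / k)
  have hart : HasDerivAt (fun y : ℝ => Real.artanhLog (Real.sin y / k))
      (k * Real.cos x / (k ^ 2 - Real.sin x ^ 2)) x := by
    have hfun : (fun y : ℝ => Real.artanhLog (Real.sin y / k)) =
        fun y : ℝ => (1/2) * (Real.log (1 + Real.sin y / k) - Real.log (1 - Real.sin y / k)) := by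
      funext y
      rw [Real.artanhLog, Real.log_div (ne_of_gt (h1 y)) (ne_of_gt (h2 y))]
    rw [hfun]
    have hsin := Real.hasDerivAt_sin x
    have hA : HasDerivAt (fun y : ℝ => 1 + Real.sin y / k) (Real.cos x / k) x :=
      (hsin.div_const k).const_add 1
    have hB : HasDerivAt (fun y : ℝ => 1 - Real.sin y / k) (-(Real.cos x / k)) x :=
      (hsin.div_const k).const_sub 1
    have := ((hA.log (ne_of_gt (h1 x))).sub (hB.log (ne_of_gt (h2 x)))).const_mul (1/2:ℝ)
    convert this using 1
    · rfl
    · rfl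
    · rfl
    have e3 : k + Real.sin x ≠ 0 := by nlinarith [Real.neg_one_le_sin x]
    have e4 : k - Real.sin x ≠ 0 := by nlinarith [Real.sin_le_one x]
    field_simp
    ring
  -- derivative of the arctan part
  have hN : HasDerivAt (fun y : ℝ => (s / k - 1) * (Real.sin y * Real.cos y))
      ((s / k - 1) * (Real.cos x * Real.cos x + Real.sin x * -Real.sin x)) x :=
    ((Real.hasDerivAt_sin x).mul (Real.hasDerivAt_cos x)).const_mul _
  have hDf : HasDerivAt (fun y : ℝ => Real.cos y ^ 2 + s / k * Real.sin y ^ 2)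
      (2 * Real.cos x ^ 1 * -Real.sin x + s / k * (2 * Real.sin x ^ 1 * Real.cos x)) x :=
    ((Real.hasDerivAt_cos x).pow 2).add (((Real.hasDerivAt_sin x).pow 2).const_mul _)
  have hw := hN.div hDf (ne_of_gt hD)
  have harc := hw.arctan
  have hsc := Real.sin_sq_add_cos_sq x
  have hDne := hD.ne'
  have hdenne := hden.ne'
  have hkne := hk0.ne'
  have harc' : HasDerivAt (fun y : ℝ => Real.arctan
      ((s / k - 1) * (Real.sin y * Real.cos y) /
        (Real.cos y ^ 2 + s / k * Real.sin y ^ 2)))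
      (k * s / (k ^ 2 - Real.sin x ^ 2) - 1) x := by
    convert harc using 1
    · rfl
    rw [one_div_mul_eq_div]
    exact (alg1 k s (s / k) (Real.sin x) (Real.cos x)
      (div_mul_cancel₀ s hk0.ne').symm (Real.sin_sq_add_cos_sq x) hs2 hD hden hk0).symm
  have hmain := ((((Real.hasDerivAt_cos x).neg.mul hart).add
    ((hasDerivAt_id x).const_mul k)).sub (((hasDerivAt_id x).add harc').const_mul s))
  convert hmain using 1
  · rfl
  · rfl
  · rfl
  field_simp
  rw [Pi.neg_apply]
  linear_combination k * hsc + k * hs2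


/-- The definite-integral identity used for the hyperbolic billiard bound:
`∫₀^π artanh(sin φ / k)·sin φ dφ = π·(k − √(k² − 1))` for `k > 1`. -/
theorem integral_artanh_sin_div (k : ℝ) (hk : 1 < k) :
    ∫ φ in (0 : ℝ)..π, Real.artanhLog (Real.sin φ / k) * Real.sin φ =
      π * (k - Real.sqrt (k ^ 2 - 1)) := by
  have hk0 : (0:ℝ) < k := by linarith
  have h1 : ∀ y : ℝ, (0:ℝ) < 1 + Real.sin y / k := by
    intro y
    have := Real.neg_one_le_sin y
    have h2 : -1 < Real.sin y / k := by rw [lt_div_iff₀ hk0]; nlinarith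
    linarith
  have h2 : ∀ y : ℝ, (0:ℝ) < 1 - Real.sin y / k := by
    intro y
    have := Real.sin_le_one y
    have h2 : Real.sin y / k < 1 := by rw [div_lt_iff₀ hk0]; nlinarith
    linarith
  have hcont : Continuous fun φ : ℝ => Real.artanhLog (Real.sin φ / k) * Real.sin φ := by
    have heq : (fun φ : ℝ => Real.artanhLog (Real.sin φ / k)) =
        fun φ : ℝ => (1 / 2) * Real.log ((1 + Real.sin φ / k) / (1 - Real.sin φ / k)) :=
      funext fun φ => rfl
    apply Continuous.mul _ Real.continuous_sin
    rw [heq]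
    apply continuous_const.mul
    apply Continuous.log
    · exact (continuous_const.add (Real.continuous_sin.div_const k)).div
        (continuous_const.sub (Real.continuous_sin.div_const k)) (fun x => (h2 x).ne')
    · exact fun x => (div_pos (h1 x) (h2 x)).ne'
  rw [intervalIntegral.integral_eq_sub_of_hasDerivAt
    (fun x _ => deriv_main k hk x) (hcont.intervalIntegrable 0 π)]
  have hart0 : Real.artanhLog 0 = 0 := by
    simp [Real.artanhLog]
  simp only [Real.sin_pi, Real.cos_pi, Real.sin_zero, Real.cos_zero, zero_div, hart0,
    mul_zero, zero_mul, mul_one, one_pow, Real.arctan_zero, add_zero, sub_zero, zero_add,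
    mul_zero, neg_mul, one_mul, neg_zero]
  ring
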